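/- For p ∈ S and v ∈ T_pS set η'_p(v) = p₂·v₁ − p₁·v₂, η''_p(v) = w₂(p)·(Dw₁(p)v) − w₁(p)·(Dw₂(p)v), and θ_p(v) = −w₁(p)·v₁ − w₂(p)·v₂. Then for every p ∈ S and all v, v' ∈ T_pS: (a) −2·(v₁·v'₂ − v'₁·v₂) = 2·(η'_p(v)·θ_p(v') − η'_p(v')·θ_p(v)); (b) −2·[(Dw₁(p)v)·(Dw₂(p)v') − (Dw₁(p)v')·(Dw₂(p)v)] = −2·(η''_p(v)·θ_p(v') − η''_p(v')·θ_p(v)); (c) Σ_{m=1}^{2} [v_m·(Dw_m(p)v') − v'_m·(Dw_m(p)v)] = η'_p(v)·η''_p(v') − η'_p(v')·η''_p(v). (These are the structure equations dη' = 2·η'∧θ, dη'' = −2·η''∧θ, and dθ = η'∧η'' as 2-forms on S.) -/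

import Mathlib

open Complex

/-- Wirtinger derivative ∂F/∂z_j at p. -/
noncomputable def wirtZ {n : ℕ} (F : (Fin n → ℂ) → ℂ) (p : Fin n → ℂ) (j : Fin n) : ℂ :=
  (1/2) * (fderiv ℝ F p (Pi.single j 1) - I * fderiv ℝ F p (Pi.single j I))

/-- Wirtinger derivative ∂F/∂z̄_j at p. -/
noncomputable def wirtZbar {n : ℕ} (F : (Fin n → ℂ) → ℂ) (p : Fin n → ℂ) (j : Fin n) : ℂ :=
  (1/2) * (fderiv ℝ F p (Pi.single j 1) + I * fderiv ℝ F p (Pi.single j I))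

/-- The projective dual coordinates w_j(z) = (∂ρ/∂z_j)/(Σ_k z_k ∂ρ/∂z_k). -/
noncomputable def wC {n : ℕ} (ρ : (Fin n → ℂ) → ℝ) (z : Fin n → ℂ) (j : Fin n) : ℂ :=
  wirtZ (fun q => (ρ q : ℂ)) z j / ∑ k, z k * wirtZ (fun q => (ρ q : ℂ)) z k

/-- η'_p(v) = p₂·v₁ − p₁·v₂. -/
noncomputable def etaP (p v : Fin 2 → ℂ) : ℂ := p 1 * v 0 - p 0 * v 1

/-- η''_p(v) = w₂(p)·(Dw₁(p)v) − w₁(p)·(Dw₂(p)v). -/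
noncomputable def etaPP (ρ : (Fin 2 → ℂ) → ℝ) (p v : Fin 2 → ℂ) : ℂ :=
  wC ρ p 1 * fderiv ℝ (fun q => wC ρ q 0) p v - wC ρ p 0 * fderiv ℝ (fun q => wC ρ q 1) p v

/-- θ_p(v) = −w₁(p)·v₁ − w₂(p)·v₂. -/
noncomputable def thetaF (ρ : (Fin 2 → ℂ) → ℝ) (p v : Fin 2 → ℂ) : ℂ :=
  -(wC ρ p 0) * v 0 - wC ρ p 1 * v 1

theorem structure_equations
    (ρ : (Fin 2 → ℂ) → ℝ) (hρ : ContDiff ℝ (⊤ : ℕ∞) ρ)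
    (S : Set (Fin 2 → ℂ)) (hSdef : S = ρ ⁻¹' {0}) (hSne : S.Nonempty)
    (hDρ : ∀ p ∈ S, fderiv ℝ ρ p ≠ 0)
    (hsum : ∀ p ∈ S, (∑ k, p k * wirtZ (fun q => (ρ q : ℂ)) p k) ≠ 0) :
    ∀ p ∈ S, ∀ v v' : Fin 2 → ℂ, fderiv ℝ ρ p v = 0 → fderiv ℝ ρ p v' = 0 →
      (-2 * (v 0 * v' 1 - v' 0 * v 1)
          = 2 * (etaP p v * thetaF ρ p v' - etaP p v' * thetaF ρ p v)) ∧
      (-2 * (fderiv ℝ (fun q => wC ρ q 0) p v * fderiv ℝ (fun q => wC ρ q 1) p v'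
              - fderiv ℝ (fun q => wC ρ q 0) p v' * fderiv ℝ (fun q => wC ρ q 1) p v)
          = -2 * (etaPP ρ p v * thetaF ρ p v' - etaPP ρ p v' * thetaF ρ p v)) ∧
      ((∑ m, (v m * fderiv ℝ (fun q => wC ρ q m) p v' - v' m * fderiv ℝ (fun q => wC ρ q m) p v))
          = etaP p v * etaPP ρ p v' - etaP p v' * etaPP ρ p v) := by
  intro p hp v v' _ _
  -- smoothness of the Wirtinger derivatives of ρ
  have hF : ContDiff ℝ (⊤ : ℕ∞) (fun q => ((ρ q : ℝ) : ℂ)) :=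
    Complex.ofRealCLM.contDiff.comp hρ
  have h1 : ContDiff ℝ (⊤ : ℕ∞) (fun z => fderiv ℝ (fun q => ((ρ q : ℝ) : ℂ)) z) :=
    hF.fderiv_right (by simp)
  have hg : ∀ j : Fin 2, ContDiff ℝ (⊤ : ℕ∞)
      (fun z => wirtZ (fun q => ((ρ q : ℝ) : ℂ)) z j) := by
    intro j
    unfold wirtZ
    exact contDiff_const.mul ((h1.clm_apply contDiff_const).sub
      (contDiff_const.mul (h1.clm_apply contDiff_const)))
  set G : (Fin 2 → ℂ) → ℂ := fun z => ∑ k, z k * wirtZ (fun q => ((ρ q : ℝ) : ℂ)) z k with hG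
  have hσ : ContDiff ℝ (⊤ : ℕ∞) G := by
    apply ContDiff.sum
    intro k _
    exact (ContinuousLinearMap.proj k :
      ((Fin 2 → ℂ) →L[ℝ] ℂ)).contDiff.mul (hg k)
  have hσp : G p ≠ 0 := hsum p hp
  -- w_j is differentiable at p
  have hwdiff : ∀ j : Fin 2, DifferentiableAt ℝ (fun z => wC ρ z j) p := by
    intro j
    have : (fun z => wC ρ z j)
        = fun z => wirtZ (fun q => ((ρ q : ℝ) : ℂ)) z j / G z := rfl
    have h2 : (fun z => wC ρ z j)
        = fun z => wirtZ (fun q => ((ρ q : ℝ) : ℂ)) z j * (G z)⁻¹ := by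
      funext z; rw [wC, div_eq_mul_inv]
    rw [h2]
    have hnum : DifferentiableAt ℝ (fun z => wirtZ (fun q => ((ρ q : ℝ) : ℂ)) z j) p :=
      ((hg j).differentiable (by simp)) p
    have hden : DifferentiableAt ℝ G p := ((hσ.differentiable (by simp)) p)
    have hinv : DifferentiableAt ℝ (Inv.inv : ℂ → ℂ) (G p) := differentiableAt_inv hσp
    exact hnum.mul (hinv.comp p hden)
  -- the identity ∑ z_k w_k(z) = 1 near p
  have hev : ∀ᶠ z in nhds p, G z ≠ 0 :=
    ((hσ.continuous).continuousAt).eventually_ne hσp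
  have hone : (fun z => ∑ k, z k * wC ρ z k) =ᶠ[nhds p] (fun _ => (1 : ℂ)) := by
    filter_upwards [hev] with z hz
    have : ∑ k, z k * wC ρ z k = (∑ k, z k * wirtZ (fun q => ((ρ q : ℝ) : ℂ)) z k) / G z := by
      rw [Finset.sum_div]
      refine Finset.sum_congr rfl fun k _ => ?_
      rw [wC, mul_div_assoc]
    rw [this]
    exact div_self hz
  have honep : p 0 * wC ρ p 0 + p 1 * wC ρ p 1 = 1 := by
    have := hone.self_of_nhds
    simpa [Fin.sum_univ_two] using this
  -- differentiate the identity
  have hfd0 : fderiv ℝ (fun z => ∑ k, z k * wC ρ z k) p = 0 := by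
    rw [hone.fderiv_eq]
    exact fderiv_const_apply 1
  have key : ∀ u : Fin 2 → ℂ,
      u 0 * wC ρ p 0 + u 1 * wC ρ p 1
        + p 0 * fderiv ℝ (fun q => wC ρ q 0) p u
        + p 1 * fderiv ℝ (fun q => wC ρ q 1) p u = 0 := by
    intro u
    have hterm : ∀ k : Fin 2, fderiv ℝ (fun z => z k * wC ρ z k) p u
        = u k * wC ρ p k + p k * fderiv ℝ (fun z => wC ρ z k) p u := by
      intro k
      have hzk : DifferentiableAt ℝ (fun z : Fin 2 → ℂ => z k) p :=
        (ContinuousLinearMap.proj k : ((Fin 2 → ℂ) →L[ℝ] ℂ)).differentiableAt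
      rw [fderiv_fun_mul hzk (hwdiff k)]
      have hpk : fderiv ℝ (fun z : Fin 2 → ℂ => z k) p = ContinuousLinearMap.proj k :=
        ((ContinuousLinearMap.proj k : ((Fin 2 → ℂ) →L[ℝ] ℂ)).hasFDerivAt).fderiv
      rw [ContinuousLinearMap.add_apply, ContinuousLinearMap.smul_apply,
        ContinuousLinearMap.smul_apply, hpk, smul_eq_mul, smul_eq_mul]
      have : (ContinuousLinearMap.proj k : ((Fin 2 → ℂ) →L[ℝ] ℂ)) u = u k := rfl
      rw [this]
      ring
    have hsumfd : fderiv ℝ (fun z => ∑ k, z k * wC ρ z k) p u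
        = ∑ k, fderiv ℝ (fun z => z k * wC ρ z k) p u := by
      rw [fderiv_fun_sum]
      · simp
      · intro k _
        exact ((ContinuousLinearMap.proj k :
          ((Fin 2 → ℂ) →L[ℝ] ℂ)).differentiableAt).mul (hwdiff k)
    have h0 : (0 : ℂ) = ∑ k, fderiv ℝ (fun z => z k * wC ρ z k) p u := by
      rw [← hsumfd, hfd0]; rfl
    rw [Fin.sum_univ_two, hterm 0, hterm 1] at h0
    linear_combination -h0
  have Kv := key v
  have Kv' := key v'
  set w0 := wC ρ p 0 with hw0
  set w1 := wC ρ p 1 with hw1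
  set a := fderiv ℝ (fun q => wC ρ q 0) p v with ha
  set b := fderiv ℝ (fun q => wC ρ q 1) p v with hb
  set a' := fderiv ℝ (fun q => wC ρ q 0) p v' with ha'
  set b' := fderiv ℝ (fun q => wC ρ q 1) p v' with hb'
  refine ⟨?_, ?_, ?_⟩
  · simp only [etaP, thetaF, ← hw0, ← hw1]
    linear_combination (2 * (v 0 * v' 1 - v' 0 * v 1)) * honep
  · simp only [etaPP, thetaF, ← hw0, ← hw1, ← ha, ← hb, ← ha', ← hb']
    linear_combination 2 * (w1 * a' - w0 * b') * Kv - 2 * (w1 * a - w0 * b) * Kv'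
      + 2 * (a * b' - a' * b) * honep
  · rw [Fin.sum_univ_two]
    simp only [etaP, etaPP, ← hw0, ← hw1, ← ha, ← hb, ← ha', ← hb']
    linear_combination (-(v 0 * a' - v' 0 * a + v 1 * b' - v' 1 * b)) * honep
      + (w0 * v 0 + w1 * v 1) * Kv' - (w0 * v' 0 + w1 * v' 1) * Kv
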